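/- Let G be a simple 3-regular graph with girth at least 5. Then for every edge xy of G one has W_1(μ_x^{1/4}, μ_y^{1/4}) ≥ 1, i.e. κ_{1/4}(x,y) ≤ 0. -/

import Mathlib

open scoped ENNReal

namespace RicciFlatCubic

variable {V : Type*}

/-- The probability measure `μ_x^p` on the vertex set: mass `p` at `x`,
mass `(1-p)/deg x` at each neighbor of `x`, and `0` elsewhere. -/
noncomputable def muMeasure (G : SimpleGraph V) [G.LocallyFinite] (p : ℝ≥0∞) (x : V) :
    V → ℝ≥0∞ := fun z =>
  haveI : DecidableEq V := Classical.decEq V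
  haveI : Decidable (G.Adj x z) := Classical.dec _
  if z = x then p
  else if G.Adj x z then (1 - p) / (G.degree x : ℝ≥0∞)
  else 0

/-- `π : V × V → [0,1]` is a transport plan from `μ₁` to `μ₂` if its marginals are `μ₁`, `μ₂`. -/
def IsTransportPlan (μ₁ μ₂ : V → ℝ≥0∞) (π : V → V → ℝ≥0∞) : Prop :=
  (∀ u v, π u v ≤ 1) ∧ (∀ u, ∑' v, π u v = μ₁ u) ∧ (∀ v, ∑' u, π u v = μ₂ v)

/-- The Wasserstein distance `W₁(μ₁, μ₂)`: the infimum over all transport plans of the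
transport cost `∑ d(u,v) π(u,v)`, where `d` is the shortest-path distance in `G`. -/
noncomputable def W1 (G : SimpleGraph V) (μ₁ μ₂ : V → ℝ≥0∞) : ℝ≥0∞ :=
  ⨅ π : {π : V → V → ℝ≥0∞ // IsTransportPlan μ₁ μ₂ π},
    ∑' q : V × V, (G.dist q.1 q.2 : ℝ≥0∞) * π.1 q.1 q.2

/-- The `p`-Ollivier-Ricci curvature `κ_p(x,y) = 1 - W₁(μ_x^p, μ_y^p)` (as a real number),
for a real idleness parameter `p`. -/
noncomputable def kappa (G : SimpleGraph V) [G.LocallyFinite] (p : ℝ) (x y : V) : ℝ :=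
  1 - (W1 G (muMeasure G (ENNReal.ofReal p) x) (muMeasure G (ENNReal.ofReal p) y)).toReal

/-- The edge `xy` lies on two 5-cycles whose vertex sets intersect exactly in `{x, y}`. -/
def TwoPentagons (G : SimpleGraph V) (x y : V) : Prop :=
  ∃ P₁ P₂ : G.Walk x x, P₁.IsCycle ∧ P₂.IsCycle ∧ P₁.length = 5 ∧ P₂.length = 5 ∧
    s(x, y) ∈ P₁.edges ∧ s(x, y) ∈ P₂.edges ∧
    {v | v ∈ P₁.support} ∩ {v | v ∈ P₂.support} = {x, y}

/-- The Petersen graph as the Kneser graph `K(5,2)`. -/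
def petersen : SimpleGraph {s : Finset (Fin 5) // s.card = 2} where
  Adj a b := Disjoint a.1 b.1
  symm := ⟨fun _ _ h => h.symm⟩
  loopless := by
    refine ⟨?_⟩
    rintro ⟨s, hs⟩ h
    rw [disjoint_self] at h
    simp only [Finset.bot_eq_empty] at h
    simp [h] at hs

/-- The Triplex: a 12-cycle on `ℤ/12ℤ` together with six chords. -/
def triplex : SimpleGraph (ZMod 12) :=
  SimpleGraph.fromRel fun i j =>
    j = i + 1 ∨ (i = 1 ∧ j = 7) ∨ (i = 2 ∧ j = 10) ∨ (i = 3 ∧ j = 8) ∨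
      (i = 4 ∧ j = 12) ∨ (i = 5 ∧ j = 9) ∨ (i = 6 ∧ j = 11)

/-- The dodecahedral graph: layer `0` is the outer 5-cycle `a`, layers `1`, `2` form the
middle 10-cycle `b₁ c₁ b₂ c₂ … b₅ c₅`, layer `3` is the inner 5-cycle `d`. -/
def dodecahedral : SimpleGraph (Fin 4 × ZMod 5) :=
  SimpleGraph.fromRel fun p q =>
    (p.1 = 0 ∧ q.1 = 0 ∧ q.2 = p.2 + 1) ∨
    (p.1 = 0 ∧ q.1 = 1 ∧ q.2 = p.2) ∨
    (p.1 = 1 ∧ q.1 = 2 ∧ q.2 = p.2) ∨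
    (p.1 = 2 ∧ q.1 = 1 ∧ q.2 = p.2 + 1) ∨
    (p.1 = 2 ∧ q.1 = 3 ∧ q.2 = p.2) ∨
    (p.1 = 3 ∧ q.1 = 3 ∧ q.2 = p.2 + 1)

/-- The half-dodecahedral graph: inner 5-cycle `y` (`Sum.inl`), outer 10-cycle `x`
(`Sum.inr`), and spokes `yᵢ ~ x_{2i-1}`. -/
def halfDodecahedral : SimpleGraph (ZMod 5 ⊕ ZMod 10) :=
  SimpleGraph.fromRel fun p q =>
    (∃ i : ZMod 5, p = Sum.inl i ∧ q = Sum.inl (i + 1)) ∨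
    (∃ j : ZMod 10, p = Sum.inr j ∧ q = Sum.inr (j + 1)) ∨
    (∃ i : ZMod 5, p = Sum.inl i ∧ q = Sum.inr (2 * (i.val : ZMod 10) - 1))

/-- The two-sided infinite path on `ℤ`. -/
def infinitePath : SimpleGraph ℤ := SimpleGraph.fromRel fun i j => j = i + 1

/-- The cycle `Cₙ` on `ℤ/nℤ`. -/
def cycleZMod (n : ℕ) : SimpleGraph (ZMod n) := SimpleGraph.fromRel fun i j => j = i + 1

noncomputable instance (v : {s : Finset (Fin 5) // s.card = 2}) :
    Fintype (petersen.neighborSet v) := (Set.toFinite _).fintype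

noncomputable instance (v : ZMod 12) : Fintype (triplex.neighborSet v) :=
  (Set.toFinite _).fintype

noncomputable instance (v : Fin 4 × ZMod 5) : Fintype (dodecahedral.neighborSet v) :=
  (Set.toFinite _).fintype

open SimpleGraph
private lemma q1 : (4:ℝ≥0∞) * (1/4) = 1 := by
  rw [mul_one_div, ENNReal.div_self (by norm_num) (by norm_num)]

private lemma h34 : (1:ℝ≥0∞) = 3*(1/4) + 1/4 := by
  have h : (3:ℝ≥0∞)*(1/4) + 1/4 = 4*(1/4) := by ring
  rw [h, q1]

private lemma quarter : ((1:ℝ≥0∞) - 1/4)/3 = 1/4 := by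
  rw [ENNReal.sub_eq_of_eq_add (by simp [ENNReal.div_eq_top]) h34,
    eq_comm, ENNReal.eq_div_iff (by norm_num) (by norm_num)]

private lemma no_tri {V : Type*} {G : SimpleGraph V} (hg : 5 ≤ G.egirth) {a b c : V}
    (hab : G.Adj a b) (hbc : G.Adj b c) (hca : G.Adj c a) : False := by
  have hw : (Walk.cons hab (Walk.cons hbc (Walk.cons hca Walk.nil))).IsCycle := by
    simp [Walk.isCycle_def, Walk.isTrail_def, hab.ne, hbc.ne, hca.ne, hab.ne', hbc.ne', hca.ne',
      Sym2.eq, Sym2.rel_iff']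
  have := le_egirth.mp hg _ _ hw
  norm_num at this

private lemma no_sq {V : Type*} {G : SimpleGraph V} (hg : 5 ≤ G.egirth) {a b c d : V}
    (hab : G.Adj a b) (hbc : G.Adj b c) (hcd : G.Adj c d) (hda : G.Adj d a)
    (hac : a ≠ c) (hbd : b ≠ d) : False := by
  have hw : (Walk.cons hab (Walk.cons hbc (Walk.cons hcd (Walk.cons hda Walk.nil)))).IsCycle := by
    simp [Walk.isCycle_def, Walk.isTrail_def, hab.ne, hbc.ne, hcd.ne, hda.ne,
      hab.ne', hbc.ne', hcd.ne', hda.ne', hac, hbd, hac.symm, hbd.symm,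
      Sym2.eq, Sym2.rel_iff']
  have := le_egirth.mp hg _ _ hw
  norm_num at this

private lemma two_le_dist' {V : Type*} {G : SimpleGraph V} {u v : V} (hr : G.Reachable u v)
    (hne : u ≠ v) (hna : ¬ G.Adj u v) : 2 ≤ G.dist u v := by
  have h0 := hr.pos_dist_of_ne hne
  have h1 : G.dist u v ≠ 1 := fun h => hna (SimpleGraph.dist_eq_one_iff_adj.mp h)
  omega

theorem one_le_W1 {V : Type*} (G : SimpleGraph V) [G.LocallyFinite]
    (hreg : G.IsRegularOfDegree 3) (hgirth : 5 ≤ G.egirth) (x y : V) (hxy : G.Adj x y) :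
    1 ≤ W1 G (muMeasure G (1/4) x) (muMeasure G (1/4) y) := by
  classical
  -- the potential function
  set f : V → ℝ≥0∞ := fun u => if u = y then 1 else if G.Adj y u ∧ u ≠ x then 0 else 2 with hf
  have fy : f y = 1 := by simp [hf]
  have fx : f x = 2 := by simp [hf, hxy.ne]
  have fle : ∀ u, f u ≤ 2 := by
    intro u; simp only [hf]; split_ifs <;> norm_num
  have fa : ∀ u, G.Adj x u → u ≠ y → f u = 2 := by
    intro u hxu huy
    have h1 : ¬ (G.Adj y u ∧ u ≠ x) := by
      rintro ⟨hyu, -⟩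
      exact no_tri hgirth hxu hyu.symm hxy.symm
    simp [hf, huy, h1]
  have fb : ∀ v, G.Adj y v → v ≠ x → f v = 0 := by
    intro v hyv hvx
    simp [hf, hyv.ne', hyv, hvx]
  -- the Lipschitz property on the supports
  have lip : ∀ u v, (u = x ∨ G.Adj x u) → (v = y ∨ G.Adj y v) →
      f u ≤ (G.dist u v : ℝ≥0∞) + f v := by
    intro u v hu hv
    have hrux : G.Reachable u x := by
      rcases hu with rfl | h
      · exact Reachable.refl _
      · exact h.symm.reachable
    have hryv : G.Reachable y v := by
      rcases hv with rfl | h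
      · exact Reachable.refl _
      · exact h.reachable
    have hruv : G.Reachable u v := (hrux.trans hxy.reachable).trans hryv
    by_cases hvy : v = y
    · rw [hvy, fy]
      by_cases huy : u = y
      · rw [huy, fy]; exact le_add_self
      · have h1 : (1:ℝ≥0∞) ≤ (G.dist u y : ℝ≥0∞) := by
          have := (hrux.trans hxy.reachable).pos_dist_of_ne huy
          exact_mod_cast this
        calc f u ≤ 2 := fle u
        _ = 1 + 1 := by norm_num
        _ ≤ (G.dist u y : ℝ≥0∞) + 1 := by exact add_le_add_left h1 1
    · have hvadj : G.Adj y v := hv.resolve_left hvy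
      by_cases hvx : v = x
      · rw [hvx, fx]
        calc f u ≤ 2 := fle u
        _ ≤ (G.dist u x : ℝ≥0∞) + 2 := le_add_self
      · rw [fb v hvadj hvx, add_zero]
        by_cases huy : u = y
        · rw [huy, fy, SimpleGraph.dist_eq_one_iff_adj.mpr hvadj]
          norm_num
        · by_cases hub : G.Adj y u ∧ u ≠ x
          · have : f u = 0 := by simp [hf, huy, hub]
            rw [this]; exact zero_le
          · have hfu : f u = 2 := by simp [hf, huy, hub]
            rw [hfu]
            have h2 : 2 ≤ G.dist u v := by
              rcases hu with rfl | hxu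
              · refine two_le_dist' hruv (fun h => hvx h.symm) (fun h => ?_)
                exact no_tri hgirth h hvadj.symm hxy.symm
              · have hune : u ≠ v := by
                  rintro rfl
                  exact hub ⟨hvadj, hvx⟩
                refine two_le_dist' hruv hune (fun h => ?_)
                exact no_sq hgirth hxu h hvadj.symm hxy.symm (fun h' => hvx h'.symm) huy
            exact_mod_cast h2
  -- values of the measures
  have mux : ∀ u, muMeasure G (1/4) x u
      = if u = x then 1/4 else if G.Adj x u then 1/4 else 0 := by
    intro u
    unfold muMeasure
    rw [hreg x]
    split_ifs with h1 h2
    · rfl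
    · rw [show ((3:ℕ):ℝ≥0∞) = 3 by norm_num, quarter]
    · rfl
  have muy : ∀ v, muMeasure G (1/4) y v
      = if v = y then 1/4 else if G.Adj y v then 1/4 else 0 := by
    intro v
    unfold muMeasure
    rw [hreg y]
    split_ifs with h1 h2
    · rfl
    · rw [show ((3:ℕ):ℝ≥0∞) = 3 by norm_num, quarter]
    · rfl
  -- the two weighted sums
  have hxs : x ∉ G.neighborFinset x := by simp
  have hys : y ∉ G.neighborFinset y := by simp
  have hA : ∑' u, f u * muMeasure G (1/4) x u = 2*(1/4) + (1*(1/4) + 2*(2*(1/4))) := by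
    rw [tsum_eq_sum (s := insert x (G.neighborFinset x)) (by
      intro u hu
      simp only [Finset.mem_insert, mem_neighborFinset] at hu
      push_neg at hu
      rw [mux u, if_neg hu.1, if_neg hu.2, mul_zero])]
    rw [Finset.sum_insert hxs]
    have hyx : y ∈ G.neighborFinset x := by simp [hxy]
    rw [← Finset.insert_erase hyx, Finset.sum_insert (Finset.notMem_erase _ _)]
    have e1 : f x * muMeasure G (1/4) x x = 2 * (1/4) := by
      rw [fx, mux x, if_pos rfl]
    have e2 : f y * muMeasure G (1/4) x y = 1 * (1/4) := by
      rw [fy, mux y, if_neg hxy.ne', if_pos hxy]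
    have e3 : ∀ u ∈ (G.neighborFinset x).erase y, f u * muMeasure G (1/4) x u = 2 * (1/4) := by
      intro u hu
      rw [Finset.mem_erase, mem_neighborFinset] at hu
      rw [fa u hu.2 hu.1, mux u, if_neg hu.2.ne', if_pos hu.2]
    rw [e1, e2, Finset.sum_congr rfl e3, Finset.sum_const]
    have hcard : ((G.neighborFinset x).erase y).card = 2 := by
      rw [Finset.card_erase_of_mem hyx]
      have := hreg x
      rw [SimpleGraph.degree] at this
      omega
    rw [hcard, two_nsmul]
    ring
  have hB : ∑' v, f v * muMeasure G (1/4) y v = 1*(1/4) + (2*(1/4) + 0) := by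
    rw [tsum_eq_sum (s := insert y (G.neighborFinset y)) (by
      intro v hv
      simp only [Finset.mem_insert, mem_neighborFinset] at hv
      push_neg at hv
      rw [muy v, if_neg hv.1, if_neg hv.2, mul_zero])]
    rw [Finset.sum_insert hys]
    have hxys : x ∈ G.neighborFinset y := by simp [hxy.symm]
    rw [← Finset.insert_erase hxys, Finset.sum_insert (Finset.notMem_erase _ _)]
    have e1 : f y * muMeasure G (1/4) y y = 1 * (1/4) := by
      rw [fy, muy y, if_pos rfl]
    have e2 : f x * muMeasure G (1/4) y x = 2 * (1/4) := by
      rw [fx, muy x, if_neg hxy.ne, if_pos hxy.symm]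
    have e3 : ∀ v ∈ (G.neighborFinset y).erase x, f v * muMeasure G (1/4) y v = 0 := by
      intro v hv
      rw [Finset.mem_erase, mem_neighborFinset] at hv
      rw [fb v hv.2 hv.1, zero_mul]
    rw [e1, e2, Finset.sum_congr rfl e3, Finset.sum_const, smul_zero]
  -- main estimate
  rw [W1]
  refine le_iInf ?_
  rintro ⟨π, hπle, hπ1, hπ2⟩
  have hsupp : ∀ u v, π u v ≠ 0 → (u = x ∨ G.Adj x u) ∧ (v = y ∨ G.Adj y v) := by
    intro u v h
    constructor
    · by_contra hc
      push_neg at hc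
      have h0 : muMeasure G (1/4) x u = 0 := by rw [mux u, if_neg hc.1, if_neg hc.2]
      have hle : π u v ≤ muMeasure G (1/4) x u := (hπ1 u) ▸ ENNReal.le_tsum v
      rw [h0, le_zero_iff] at hle
      exact h hle
    · by_contra hc
      push_neg at hc
      have h0 : muMeasure G (1/4) y v = 0 := by rw [muy v, if_neg hc.1, if_neg hc.2]
      have hle : π u v ≤ muMeasure G (1/4) y v := (hπ2 v) ▸ ENNReal.le_tsum u
      rw [h0, le_zero_iff] at hle
      exact h hle
  have key : ∑' u, f u * muMeasure G (1/4) x u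
      ≤ (∑' q : V × V, (G.dist q.1 q.2 : ℝ≥0∞) * π q.1 q.2)
        + ∑' v, f v * muMeasure G (1/4) y v := by
    calc ∑' u, f u * muMeasure G (1/4) x u
        = ∑' u, f u * ∑' v, π u v := by
          congr 1; funext u; rw [hπ1 u]
      _ = ∑' u, ∑' v, f u * π u v := by
          congr 1; funext u; rw [ENNReal.tsum_mul_left]
      _ = ∑' q : V × V, f q.1 * π q.1 q.2 := (ENNReal.tsum_prod (f := fun u v => f u * π u v)).symm
      _ ≤ ∑' q : V × V, ((G.dist q.1 q.2 : ℝ≥0∞) + f q.2) * π q.1 q.2 := by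
          refine ENNReal.tsum_le_tsum fun q => ?_
          rcases eq_or_ne (π q.1 q.2) 0 with h | h
          · simp [h]
          · exact mul_le_mul_left (lip q.1 q.2 (hsupp _ _ h).1 (hsupp _ _ h).2) _
      _ = (∑' q : V × V, (G.dist q.1 q.2 : ℝ≥0∞) * π q.1 q.2)
          + ∑' q : V × V, f q.2 * π q.1 q.2 := by
          rw [← ENNReal.tsum_add]
          congr 1; funext q; ring
      _ = (∑' q : V × V, (G.dist q.1 q.2 : ℝ≥0∞) * π q.1 q.2)
          + ∑' v, f v * muMeasure G (1/4) y v := by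
          congr 1
          rw [ENNReal.tsum_prod (f := fun u v => f v * π u v), ENNReal.tsum_comm]
          congr 1; funext v
          rw [ENNReal.tsum_mul_left, hπ2 v]
  rw [hA, hB] at key
  have harith : (2:ℝ≥0∞)*(1/4) + (1*(1/4) + 2*(2*(1/4))) = 1 + (1*(1/4) + (2*(1/4) + 0)) := by
    calc (2:ℝ≥0∞)*(1/4) + (1*(1/4) + 2*(2*(1/4))) = 4*(1/4) + 3*(1/4) := by ring
    _ = 1 + (1*(1/4) + (2*(1/4) + 0)) := by rw [q1]; ring
  rw [harith] at key
  have hnt : (1:ℝ≥0∞)*(1/4) + (2*(1/4) + 0) ≠ ⊤ := by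
    simp [ENNReal.add_eq_top, ENNReal.mul_eq_top, ENNReal.div_eq_top]
  exact (ENNReal.add_le_add_iff_right hnt).mp key



end RicciFlatCubic
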